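/- Let k ≥ 3, p > k prime, m = kp with m ≥ 52, and let t, s ≥ 2 with t + s = k. Suppose a, b ∈ Z/mZ satisfy ta + sb = 1. Then there exist c, d ∈ Z/mZ such that, setting a' = 1 − ((t−2)a + sb + c), b' = 1 − ((t−1)a + (s−1)b + c), a'' = 1 − ((t−1)a + (s−1)b + d), b'' = 1 − (ta + (s−2)b + d), the following hold: (i) a, b, c, a', b' are pairwise distinct; (ii) a, b, d, a'', b'' are pairwise distinct; (iii) for every pair {x, y} of distinct elements from {a, b, c, a', b'} other than {a', b'} and {a, b}, and also for (x, y) = (b, a), we have tx + sy ≠ 1; (iv) the analogous statement with {a, b, d, a'', b''} and excluded pairs {a'', b''}, {a, b}; (v) c ≠ d, c ≠ a'', and d ≠ b'. -/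

import Mathlib

section aux
variable {m : ℕ} [NeZero m]

def solSet (m : ℕ) [NeZero m] (α β : ZMod m) : Finset (ZMod m) :=
  Finset.univ.filter fun x => α * x = β

def badSet (m : ℕ) [NeZero m] (L : List (ZMod m × ZMod m)) : Finset (ZMod m) :=
  (L.map fun q => solSet m q.1 q.2).foldr (· ∪ ·) ∅

lemma mem_badSet {L : List (ZMod m × ZMod m)} {c : ZMod m} :
    c ∈ badSet m L ↔ ∃ q ∈ L, q.1 * c = q.2 := by
  induction L with
  | nil => simp [badSet]
  | cons q L ih =>
      have : badSet m (q :: L) = solSet m q.1 q.2 ∪ badSet m L := rfl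
      rw [this]
      simp [solSet, ih]

lemma two_mul_eq_zero {x : ZMod m} (h : 2 * x = 0) : x = 0 ∨ x = ((m / 2 : ℕ) : ZMod m) := by
  have hx : ((2 * x.val : ℕ) : ZMod m) = 0 := by
    push_cast
    rw [ZMod.natCast_zmod_val]
    exact h
  have hdvd : m ∣ 2 * x.val := (ZMod.natCast_eq_zero_iff _ _).mp hx
  obtain ⟨q, hq⟩ := hdvd
  have hlt : x.val < m := ZMod.val_lt x
  have hm0 : 0 < m := Nat.pos_of_ne_zero (NeZero.ne m)
  have hq2 : q < 2 := by
    by_contra hq2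
    push_neg at hq2
    have : m * 2 ≤ m * q := Nat.mul_le_mul_left m hq2
    omega
  interval_cases q
  · left
    have : x.val = 0 := by omega
    rw [← ZMod.natCast_zmod_val x, this, Nat.cast_zero]
  · right
    have : x.val = m / 2 := by omega
    rw [← ZMod.natCast_zmod_val x, this]

lemma solSet_card {α β : ZMod m} (h : ∀ x, α * x = 0 → 2 * x = 0) :
    (solSet m α β).card ≤ 2 := by
  rcases (solSet m α β).eq_empty_or_nonempty with he | ⟨c₀, hc₀⟩
  · simp [he]
  · have hsub : solSet m α β ⊆ {c₀, c₀ + ((m / 2 : ℕ) : ZMod m)} := by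
      intro x hx
      simp only [solSet, Finset.mem_filter, Finset.mem_univ, true_and] at hx hc₀
      have hker : α * (x - c₀) = 0 := by rw [mul_sub, hx, hc₀, sub_self]
      rcases two_mul_eq_zero (h _ hker) with h0 | h2
      · simp [sub_eq_zero.mp h0]
      · have : x = c₀ + ((m / 2 : ℕ) : ZMod m) := by
          rw [← h2]; ring
        simp [this]
    exact (Finset.card_le_card hsub).trans ((Finset.card_insert_le _ _).trans (by simp))

lemma badSet_card {L : List (ZMod m × ZMod m)}
    (h : ∀ q ∈ L, ∀ x, q.1 * x = 0 → 2 * x = 0) :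
    (badSet m L).card ≤ 2 * L.length := by
  induction L with
  | nil => simp [badSet]
  | cons q L ih =>
      have hb : badSet m (q :: L) = solSet m q.1 q.2 ∪ badSet m L := rfl
      rw [hb]
      refine (Finset.card_union_le _ _).trans ?_
      have h1 := solSet_card (β := q.2) (h q (by simp))
      have h2 := ih (fun q hq => h q (by simp [hq]))
      simp only [List.length_cons]
      omega

lemma exists_notMem {S : Finset (ZMod m)} (h : S.card < m) : ∃ c, c ∉ S := by
  by_contra hc
  push_neg at hc
  have := Finset.card_le_card (fun x _ => hc x : Finset.univ ⊆ S)
  rw [Finset.card_univ, ZMod.card] at this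
  omega

end aux

set_option maxHeartbeats 1000000


/-- Claim 2 of the paper: let `k ≥ 3`, `p > k` prime, `m = kp ≥ 52`, and `t, s ≥ 2`
with `t + s = k` and `ta + sb = 1` in `ZMod m`. Then one can choose `c, d ∈ ZMod m`
such that, with `a' = 1 - ((t-2)a + sb + c)`, `b' = 1 - ((t-1)a + (s-1)b + c)`,
`a'' = 1 - ((t-1)a + (s-1)b + d)`, `b'' = 1 - (ta + (s-2)b + d)`:
(i) `a, b, c, a', b'` are pairwise distinct;
(ii) `a, b, d, a'', b''` are pairwise distinct;
(iii) for all distinct `x, y ∈ {a, b, c, a', b'}` with `{x, y} ∉ {{a', b'}, {a, b}}`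
we have `tx + sy ≠ 1`, and also `tb + sa ≠ 1`;
(iv) the analogue of (iii) for `{a, b, d, a'', b''}` with excluded pairs
`{a'', b''}` and `{a, b}`;
(v) `c ≠ d`, `c ≠ a''` and `d ≠ b'`. -/
theorem exists_c_d (k p m : ℕ) (hk : 3 ≤ k) (hp : p.Prime) (hpk : k < p)
    (hm : m = k * p) (hm52 : 52 ≤ m)
    (t s : ℕ) (ht : 2 ≤ t) (hs : 2 ≤ s) (hts : t + s = k)
    (a b : ZMod m) (hab : (t : ZMod m) * a + (s : ZMod m) * b = 1) :
    ∃ c d a' b' a'' b'' : ZMod m,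
      a' = 1 - (((t - 2 : ℕ) : ZMod m) * a + (s : ZMod m) * b + c) ∧
      b' = 1 - (((t - 1 : ℕ) : ZMod m) * a + ((s - 1 : ℕ) : ZMod m) * b + c) ∧
      a'' = 1 - (((t - 1 : ℕ) : ZMod m) * a + ((s - 1 : ℕ) : ZMod m) * b + d) ∧
      b'' = 1 - ((t : ZMod m) * a + ((s - 2 : ℕ) : ZMod m) * b + d) ∧
      -- (i)
      List.Pairwise (· ≠ ·) [a, b, c, a', b'] ∧
      -- (ii)
      List.Pairwise (· ≠ ·) [a, b, d, a'', b''] ∧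
      -- (iii)
      (∀ x ∈ ({a, b, c, a', b'} : Finset (ZMod m)),
        ∀ y ∈ ({a, b, c, a', b'} : Finset (ZMod m)), x ≠ y →
          ({x, y} : Finset (ZMod m)) ≠ {a', b'} →
          ({x, y} : Finset (ZMod m)) ≠ {a, b} →
          (t : ZMod m) * x + (s : ZMod m) * y ≠ 1) ∧
      (t : ZMod m) * b + (s : ZMod m) * a ≠ 1 ∧
      -- (iv)
      (∀ x ∈ ({a, b, d, a'', b''} : Finset (ZMod m)),
        ∀ y ∈ ({a, b, d, a'', b''} : Finset (ZMod m)), x ≠ y →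
          ({x, y} : Finset (ZMod m)) ≠ {a'', b''} →
          ({x, y} : Finset (ZMod m)) ≠ {a, b} →
          (t : ZMod m) * x + (s : ZMod m) * y ≠ 1) ∧
      -- (v)
      c ≠ d ∧ c ≠ a'' ∧ d ≠ b' := by
  haveI : NeZero m := ⟨by omega⟩
  -- gcd t s = 1
  have hts1 : Nat.Coprime t s := by
    have hgt : Nat.gcd t s ∣ t := Nat.gcd_dvd_left t s
    have hgs : Nat.gcd t s ∣ s := Nat.gcd_dvd_right t s
    obtain ⟨t', ht'⟩ := hgt
    obtain ⟨s', hs'⟩ := hgs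
    have habg : (Nat.gcd t s : ZMod m) * ((t' : ZMod m) * a + (s' : ZMod m) * b) = 1 := by
      have h1 := congrArg (fun n : ℕ => (n : ZMod m)) ht'
      have h2 := congrArg (fun n : ℕ => (n : ZMod m)) hs'
      push_cast at h1 h2
      linear_combination hab - a * h1 - b * h2
    have hu : IsUnit (Nat.gcd t s : ZMod m) := IsUnit.of_mul_eq_one _ habg
    have hco : Nat.Coprime (Nat.gcd t s) m := (ZMod.isUnit_iff_coprime _ m).mp hu
    have hdm : Nat.gcd t s ∣ m := by
      rw [hm, ← hts]
      exact Dvd.dvd.mul_right (Nat.dvd_add (Nat.gcd_dvd_left t s) (Nat.gcd_dvd_right t s)) p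
    have : Nat.gcd t s ∣ 1 := hco ▸ Nat.dvd_gcd dvd_rfl hdm
    simpa [Nat.Coprime] using Nat.dvd_one.mp this
  have htk : Nat.Coprime t k := by
    rw [← hts, Nat.add_comm, Nat.Coprime, Nat.gcd_add_self_right]
    exact hts1
  have hsk : Nat.Coprime s k := by
    rw [← hts, Nat.Coprime, Nat.gcd_add_self_right]
    exact hts1.symm
  have htp : Nat.Coprime t p := ((hp.coprime_iff_not_dvd).mpr (fun hd => by
    have := Nat.le_of_dvd (by omega) hd; omega)).symm
  have hsp : Nat.Coprime s p := ((hp.coprime_iff_not_dvd).mpr (fun hd => by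
    have := Nat.le_of_dvd (by omega) hd; omega)).symm
  have htm : Nat.Coprime t m := by rw [hm]; exact Nat.Coprime.mul_right htk htp
  have hsm : Nat.Coprime s m := by rw [hm]; exact Nat.Coprime.mul_right hsk hsp
  have hU : IsUnit (t : ZMod m) := (ZMod.isUnit_iff_coprime t m).mpr htm
  have hV : IsUnit (s : ZMod m) := (ZMod.isUnit_iff_coprime s m).mpr hsm
  have hnets : t ≠ s := by
    intro h
    unfold Nat.Coprime at hts1
    rw [h, Nat.gcd_self] at hts1
    omega
  -- kernel lemmas
  have ker1 : ∀ x : ZMod m, (1 : ZMod m) * x = 0 → 2 * x = 0 := by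
    intro x hx; rw [one_mul] at hx; rw [hx, mul_zero]
  have ker2 : ∀ x : ZMod m, (2 : ZMod m) * x = 0 → 2 * x = 0 := fun _ h => h
  have kerU : ∀ x : ZMod m, (t : ZMod m) * x = 0 → 2 * x = 0 := by
    intro x hx
    obtain ⟨w, hw⟩ := hU
    have : x = 0 := by
      have := congrArg (fun z => (w.inv : ZMod m) * z) hx
      simp only [mul_zero] at this
      rw [← mul_assoc, ← hw, w.inv_val, one_mul] at this
      exact this
    rw [this, mul_zero]
  have kerV : ∀ x : ZMod m, (s : ZMod m) * x = 0 → 2 * x = 0 := by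
    intro x hx
    obtain ⟨w, hw⟩ := hV
    have : x = 0 := by
      have := congrArg (fun z => (w.inv : ZMod m) * z) hx
      simp only [mul_zero] at this
      rw [← mul_assoc, ← hw, w.inv_val, one_mul] at this
      exact this
    rw [this, mul_zero]
  -- kernel lemma for t - s
  have kerUV : ∀ x : ZMod m, ((t : ZMod m) - (s : ZMod m)) * x = 0 → 2 * x = 0 := by
    set D : ℤ := (t : ℤ) - (s : ℤ) with hD
    set g : ℕ := Int.gcd D (m : ℤ) with hg
    have hgD : (g : ℤ) ∣ D := Int.gcd_dvd_left _ _
    have hgm : g ∣ m := Int.natCast_dvd_natCast.mp (Int.gcd_dvd_right _ _)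
    have hgabs : g ∣ D.natAbs := by
      have := Int.natAbs_dvd_natAbs.mpr hgD
      simpa using this
    have hDabs : D.natAbs < p ∧ D.natAbs ≠ 0 := by
      constructor <;> omega
    have hnp : ¬ p ∣ g := by
      intro hpd
      have : p ∣ D.natAbs := hpd.trans hgabs
      have := Nat.le_of_dvd (by omega) this
      omega
    have hgp : Nat.Coprime g p := ((hp.coprime_iff_not_dvd).mpr hnp).symm
    have hgk : g ∣ k := hgp.dvd_of_dvd_mul_right (hm ▸ hgm)
    have hg2 : g ∣ 2 := by
      have hgkZ : (g : ℤ) ∣ ((t : ℤ) + s) := by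
        have : ((k : ℕ) : ℤ) = (t : ℤ) + s := by push_cast [← hts]; ring
        exact this ▸ Int.natCast_dvd_natCast.mpr hgk
      have h2t : (g : ℤ) ∣ 2 * t := by
        have : (2 : ℤ) * t = ((t : ℤ) + s) + D := by rw [hD]; ring
        rw [this]; exact dvd_add hgkZ hgD
      have h2s : (g : ℤ) ∣ 2 * s := by
        have : (2 : ℤ) * s = ((t : ℤ) + s) - D := by rw [hD]; ring
        rw [this]; exact dvd_sub hgkZ hgD
      have hbez : (1 : ℤ) = t * Nat.gcdA t s + s * Nat.gcdB t s := by
        have h0 := Nat.gcd_eq_gcd_ab t s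
        rw [hts1, Nat.cast_one] at h0
        exact h0
      have h2 : (g : ℤ) ∣ 2 := by
        have heq : (2 : ℤ) = 2 * t * Nat.gcdA t s + 2 * s * Nat.gcdB t s := by
          linear_combination 2 * hbez
        rw [heq]
        exact dvd_add (h2t.mul_right _) (h2s.mul_right _)
      exact Int.ofNat_dvd.mp (by exact_mod_cast h2)
    have hbez2 := Int.gcd_eq_gcd_ab D (m : ℤ)
    have key : (g : ZMod m) = ((t : ZMod m) - (s : ZMod m)) * ((Int.gcdA D (m : ℤ) : ℤ) : ZMod m) := by
      have h0 := congrArg (fun z : ℤ => (z : ZMod m)) hbez2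
      rw [hD] at h0
      push_cast at h0
      rw [ZMod.natCast_self] at h0
      rw [h0]
      ring
    intro x hx
    obtain ⟨w, hw⟩ := hg2
    calc 2 * x = ((g * w : ℕ) : ZMod m) * x := by rw [← hw]; push_cast; ring
      _ = ((Int.gcdA D (m : ℤ) : ℤ) : ZMod m) * (w : ℕ) * (((t : ZMod m) - (s : ZMod m)) * x) := by
          push_cast [key]; ring
      _ = 0 := by rw [hx, mul_zero]
  have kerVU : ∀ x : ZMod m, ((s : ZMod m) - (t : ZMod m)) * x = 0 → 2 * x = 0 := by
    intro x hx
    exact kerUV x (by linear_combination -hx)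
  -- a ≠ b
  have hne : a ≠ b := by
    intro h
    rw [← h] at hab
    have hk1 : ((k : ℕ) : ZMod m) * a = 1 := by rw [← hts]; push_cast; linear_combination hab
    have hp0 : ((p : ℕ) : ZMod m) = 0 := by
      calc (p : ZMod m) = (p : ZMod m) * (((k : ℕ) : ZMod m) * a) := by rw [hk1, mul_one]
        _ = ((k * p : ℕ) : ZMod m) * a := by push_cast; ring
        _ = 0 := by rw [← hm, ZMod.natCast_self, zero_mul]
    have := (ZMod.natCast_eq_zero_iff p m).mp hp0
    have := Nat.le_of_dvd hp.pos this
    nlinarith [hp.pos]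
  -- t*b + s*a ≠ 1
  have hone : (t : ZMod m) * b + (s : ZMod m) * a ≠ 1 := by
    intro h
    have hk2 : ((k : ℕ) : ZMod m) * (a + b) = 2 := by
      rw [← hts]; push_cast; linear_combination hab + h
    have h0 : ((2 * p : ℕ) : ZMod m) = 0 := by
      have hmz : ((k : ℕ) : ZMod m) * (p : ZMod m) = 0 := by
        rw [← Nat.cast_mul, ← hm, ZMod.natCast_self]
      push_cast
      linear_combination (a + b) * hmz - (p : ZMod m) * hk2
    have hd := (ZMod.natCast_eq_zero_iff (2 * p) m).mp h0
    have := Nat.le_of_dvd (by have := hp.pos; omega) hd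
    nlinarith [hp.pos]
  -- choice of c
  set Lc : List (ZMod m × ZMod m) := [
    (1, a), (1, b), (2, 2*a), (2, a+b), (1, 2*a-b),
    ((s : ZMod m), 1 - (t : ZMod m)*a),
    ((s : ZMod m), 1 - (t : ZMod m)*b),
    ((t : ZMod m), 1 - (s : ZMod m)*a),
    ((t : ZMod m), 1 - (s : ZMod m)*b),
    ((s : ZMod m), (t : ZMod m)*a + 2*(s : ZMod m)*a - 1),
    ((s : ZMod m), (t : ZMod m)*a + (s : ZMod m)*a + (s : ZMod m)*b - 1),
    ((s : ZMod m), (t : ZMod m)*b + 2*(s : ZMod m)*a - 1),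
    ((s : ZMod m), (t : ZMod m)*b + (s : ZMod m)*a + (s : ZMod m)*b - 1),
    ((t : ZMod m), 2*(t : ZMod m)*a + (s : ZMod m)*a - 1),
    ((t : ZMod m), (t : ZMod m)*a + (t : ZMod m)*b + (s : ZMod m)*a - 1),
    ((t : ZMod m), 2*(t : ZMod m)*a + (s : ZMod m)*b - 1),
    ((t : ZMod m), (t : ZMod m)*a + (t : ZMod m)*b + (s : ZMod m)*b - 1),
    ((t : ZMod m) - (s : ZMod m), 1 - 2*(s : ZMod m)*a),
    ((t : ZMod m) - (s : ZMod m), 1 - (s : ZMod m)*a - (s : ZMod m)*b),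
    ((s : ZMod m) - (t : ZMod m), 1 - 2*(t : ZMod m)*a),
    ((s : ZMod m) - (t : ZMod m), 1 - (t : ZMod m)*a - (t : ZMod m)*b)] with hLc
  have hkerLc : ∀ q ∈ Lc, ∀ x : ZMod m, q.1 * x = 0 → 2 * x = 0 := by
    intro q hq
    rw [hLc] at hq
    fin_cases hq <;>
      first | exact ker1 | exact ker2 | exact kerU | exact kerV | exact kerUV | exact kerVU
  have hlenc : Lc.length = 21 := by rw [hLc]; rfl
  have hcardc : (badSet m Lc).card < m := by
    have := badSet_card hkerLc
    rw [hlenc] at this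
    omega
  obtain ⟨c, hc⟩ := exists_notMem hcardc
  rw [mem_badSet] at hc
  push_neg at hc
  have C01 : (1 : ZMod m) * c ≠ a := hc (1, a) (by rw [hLc]; exact .head _)
  have C02 : (1 : ZMod m) * c ≠ b := hc (1, b) (by rw [hLc]; exact .tail _ (.head _))
  have C03 : (2 : ZMod m) * c ≠ 2*a := hc (2, 2*a) (by rw [hLc]; exact .tail _ (.tail _ (.head _)))
  have C04 : (2 : ZMod m) * c ≠ a+b := hc (2, a+b) (by rw [hLc]; exact .tail _ (.tail _ (.tail _ (.head _))))
  have C05 : (1 : ZMod m) * c ≠ 2*a-b := hc (1, 2*a-b) (by rw [hLc]; exact .tail _ (.tail _ (.tail _ (.tail _ (.head _)))))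
  have C06 : (s : ZMod m) * c ≠ 1 - (t : ZMod m)*a := hc ((s : ZMod m), 1 - (t : ZMod m)*a) (by rw [hLc]; exact .tail _ (.tail _ (.tail _ (.tail _ (.tail _ (.head _))))))
  have C07 : (s : ZMod m) * c ≠ 1 - (t : ZMod m)*b := hc ((s : ZMod m), 1 - (t : ZMod m)*b) (by rw [hLc]; exact .tail _ (.tail _ (.tail _ (.tail _ (.tail _ (.tail _ (.head _)))))))
  have C08 : (t : ZMod m) * c ≠ 1 - (s : ZMod m)*a := hc ((t : ZMod m), 1 - (s : ZMod m)*a) (by rw [hLc]; exact .tail _ (.tail _ (.tail _ (.tail _ (.tail _ (.tail _ (.tail _ (.head _))))))))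
  have C09 : (t : ZMod m) * c ≠ 1 - (s : ZMod m)*b := hc ((t : ZMod m), 1 - (s : ZMod m)*b) (by rw [hLc]; exact .tail _ (.tail _ (.tail _ (.tail _ (.tail _ (.tail _ (.tail _ (.tail _ (.head _)))))))))
  have C10 : (s : ZMod m) * c ≠ (t : ZMod m)*a + 2*(s : ZMod m)*a - 1 := hc ((s : ZMod m), (t : ZMod m)*a + 2*(s : ZMod m)*a - 1) (by rw [hLc]; exact .tail _ (.tail _ (.tail _ (.tail _ (.tail _ (.tail _ (.tail _ (.tail _ (.tail _ (.head _))))))))))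
  have C11 : (s : ZMod m) * c ≠ (t : ZMod m)*a + (s : ZMod m)*a + (s : ZMod m)*b - 1 := hc ((s : ZMod m), (t : ZMod m)*a + (s : ZMod m)*a + (s : ZMod m)*b - 1) (by rw [hLc]; exact .tail _ (.tail _ (.tail _ (.tail _ (.tail _ (.tail _ (.tail _ (.tail _ (.tail _ (.tail _ (.head _)))))))))))
  have C12 : (s : ZMod m) * c ≠ (t : ZMod m)*b + 2*(s : ZMod m)*a - 1 := hc ((s : ZMod m), (t : ZMod m)*b + 2*(s : ZMod m)*a - 1) (by rw [hLc]; exact .tail _ (.tail _ (.tail _ (.tail _ (.tail _ (.tail _ (.tail _ (.tail _ (.tail _ (.tail _ (.tail _ (.head _))))))))))))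
  have C13 : (s : ZMod m) * c ≠ (t : ZMod m)*b + (s : ZMod m)*a + (s : ZMod m)*b - 1 := hc ((s : ZMod m), (t : ZMod m)*b + (s : ZMod m)*a + (s : ZMod m)*b - 1) (by rw [hLc]; exact .tail _ (.tail _ (.tail _ (.tail _ (.tail _ (.tail _ (.tail _ (.tail _ (.tail _ (.tail _ (.tail _ (.tail _ (.head _)))))))))))))
  have C14 : (t : ZMod m) * c ≠ 2*(t : ZMod m)*a + (s : ZMod m)*a - 1 := hc ((t : ZMod m), 2*(t : ZMod m)*a + (s : ZMod m)*a - 1) (by rw [hLc]; exact .tail _ (.tail _ (.tail _ (.tail _ (.tail _ (.tail _ (.tail _ (.tail _ (.tail _ (.tail _ (.tail _ (.tail _ (.tail _ (.head _))))))))))))))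
  have C15 : (t : ZMod m) * c ≠ (t : ZMod m)*a + (t : ZMod m)*b + (s : ZMod m)*a - 1 := hc ((t : ZMod m), (t : ZMod m)*a + (t : ZMod m)*b + (s : ZMod m)*a - 1) (by rw [hLc]; exact .tail _ (.tail _ (.tail _ (.tail _ (.tail _ (.tail _ (.tail _ (.tail _ (.tail _ (.tail _ (.tail _ (.tail _ (.tail _ (.tail _ (.head _)))))))))))))))
  have C16 : (t : ZMod m) * c ≠ 2*(t : ZMod m)*a + (s : ZMod m)*b - 1 := hc ((t : ZMod m), 2*(t : ZMod m)*a + (s : ZMod m)*b - 1) (by rw [hLc]; exact .tail _ (.tail _ (.tail _ (.tail _ (.tail _ (.tail _ (.tail _ (.tail _ (.tail _ (.tail _ (.tail _ (.tail _ (.tail _ (.tail _ (.tail _ (.head _))))))))))))))))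
  have C17 : (t : ZMod m) * c ≠ (t : ZMod m)*a + (t : ZMod m)*b + (s : ZMod m)*b - 1 := hc ((t : ZMod m), (t : ZMod m)*a + (t : ZMod m)*b + (s : ZMod m)*b - 1) (by rw [hLc]; exact .tail _ (.tail _ (.tail _ (.tail _ (.tail _ (.tail _ (.tail _ (.tail _ (.tail _ (.tail _ (.tail _ (.tail _ (.tail _ (.tail _ (.tail _ (.tail _ (.head _)))))))))))))))))
  have C18 : ((t : ZMod m) - (s : ZMod m)) * c ≠ 1 - 2*(s : ZMod m)*a := hc (((t : ZMod m) - (s : ZMod m)), 1 - 2*(s : ZMod m)*a) (by rw [hLc]; exact .tail _ (.tail _ (.tail _ (.tail _ (.tail _ (.tail _ (.tail _ (.tail _ (.tail _ (.tail _ (.tail _ (.tail _ (.tail _ (.tail _ (.tail _ (.tail _ (.tail _ (.head _))))))))))))))))))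
  have C19 : ((t : ZMod m) - (s : ZMod m)) * c ≠ 1 - (s : ZMod m)*a - (s : ZMod m)*b := hc (((t : ZMod m) - (s : ZMod m)), 1 - (s : ZMod m)*a - (s : ZMod m)*b) (by rw [hLc]; exact .tail _ (.tail _ (.tail _ (.tail _ (.tail _ (.tail _ (.tail _ (.tail _ (.tail _ (.tail _ (.tail _ (.tail _ (.tail _ (.tail _ (.tail _ (.tail _ (.tail _ (.tail _ (.head _)))))))))))))))))))
  have C20 : ((s : ZMod m) - (t : ZMod m)) * c ≠ 1 - 2*(t : ZMod m)*a := hc (((s : ZMod m) - (t : ZMod m)), 1 - 2*(t : ZMod m)*a) (by rw [hLc]; exact .tail _ (.tail _ (.tail _ (.tail _ (.tail _ (.tail _ (.tail _ (.tail _ (.tail _ (.tail _ (.tail _ (.tail _ (.tail _ (.tail _ (.tail _ (.tail _ (.tail _ (.tail _ (.tail _ (.head _))))))))))))))))))))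
  have C21 : ((s : ZMod m) - (t : ZMod m)) * c ≠ 1 - (t : ZMod m)*a - (t : ZMod m)*b := hc (((s : ZMod m) - (t : ZMod m)), 1 - (t : ZMod m)*a - (t : ZMod m)*b) (by rw [hLc]; exact .tail _ (.tail _ (.tail _ (.tail _ (.tail _ (.tail _ (.tail _ (.tail _ (.tail _ (.tail _ (.tail _ (.tail _ (.tail _ (.tail _ (.tail _ (.tail _ (.tail _ (.tail _ (.tail _ (.tail _ (.head _)))))))))))))))))))))
  -- choice of d
  set Ld : List (ZMod m × ZMod m) := [
    (1, a), (1, b), (2, a+b), (2, 2*b), (1, 2*b-a),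
    ((s : ZMod m), 1 - (t : ZMod m)*a),
    ((s : ZMod m), 1 - (t : ZMod m)*b),
    ((t : ZMod m), 1 - (s : ZMod m)*a),
    ((t : ZMod m), 1 - (s : ZMod m)*b),
    ((s : ZMod m), (t : ZMod m)*a + (s : ZMod m)*a + (s : ZMod m)*b - 1),
    ((s : ZMod m), (t : ZMod m)*a + 2*(s : ZMod m)*b - 1),
    ((s : ZMod m), (t : ZMod m)*b + (s : ZMod m)*a + (s : ZMod m)*b - 1),
    ((s : ZMod m), (t : ZMod m)*b + 2*(s : ZMod m)*b - 1),
    ((t : ZMod m), (t : ZMod m)*a + (t : ZMod m)*b + (s : ZMod m)*a - 1),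
    ((t : ZMod m), 2*(t : ZMod m)*b + (s : ZMod m)*a - 1),
    ((t : ZMod m), (t : ZMod m)*a + (t : ZMod m)*b + (s : ZMod m)*b - 1),
    ((t : ZMod m), 2*(t : ZMod m)*b + (s : ZMod m)*b - 1),
    ((t : ZMod m) - (s : ZMod m), 1 - (s : ZMod m)*a - (s : ZMod m)*b),
    ((t : ZMod m) - (s : ZMod m), 1 - 2*(s : ZMod m)*b),
    ((s : ZMod m) - (t : ZMod m), 1 - (t : ZMod m)*a - (t : ZMod m)*b),
    ((s : ZMod m) - (t : ZMod m), 1 - 2*(t : ZMod m)*b)] with hLd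
  have hkerLd : ∀ q ∈ Ld, ∀ x : ZMod m, q.1 * x = 0 → 2 * x = 0 := by
    intro q hq
    rw [hLd] at hq
    fin_cases hq <;>
      first | exact ker1 | exact ker2 | exact kerU | exact kerV | exact kerUV | exact kerVU
  have hlend : Ld.length = 21 := by rw [hLd]; rfl
  have hcardd : ((badSet m Ld) ∪ {c, a+b-c}).card < m := by
    have h1 := badSet_card hkerLd
    rw [hlend] at h1
    have h2 : ({c, a+b-c} : Finset (ZMod m)).card ≤ 2 :=
      (Finset.card_insert_le _ _).trans (by simp)
    have h3 := Finset.card_union_le (badSet m Ld) ({c, a+b-c} : Finset (ZMod m))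
    omega
  obtain ⟨d, hd⟩ := exists_notMem hcardd
  rw [Finset.mem_union] at hd
  push_neg at hd
  obtain ⟨hd1, hd2⟩ := hd
  rw [mem_badSet] at hd1
  push_neg at hd1
  simp only [Finset.mem_insert, Finset.mem_singleton, not_or] at hd2
  obtain ⟨hdc, hdb'⟩ := hd2
  have D01 : (1 : ZMod m) * d ≠ a := hd1 (1, a) (by rw [hLd]; exact .head _)
  have D02 : (1 : ZMod m) * d ≠ b := hd1 (1, b) (by rw [hLd]; exact .tail _ (.head _))
  have D03 : (2 : ZMod m) * d ≠ a+b := hd1 (2, a+b) (by rw [hLd]; exact .tail _ (.tail _ (.head _)))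
  have D04 : (2 : ZMod m) * d ≠ 2*b := hd1 (2, 2*b) (by rw [hLd]; exact .tail _ (.tail _ (.tail _ (.head _))))
  have D05 : (1 : ZMod m) * d ≠ 2*b-a := hd1 (1, 2*b-a) (by rw [hLd]; exact .tail _ (.tail _ (.tail _ (.tail _ (.head _)))))
  have D06 : (s : ZMod m) * d ≠ 1 - (t : ZMod m)*a := hd1 ((s : ZMod m), 1 - (t : ZMod m)*a) (by rw [hLd]; exact .tail _ (.tail _ (.tail _ (.tail _ (.tail _ (.head _))))))
  have D07 : (s : ZMod m) * d ≠ 1 - (t : ZMod m)*b := hd1 ((s : ZMod m), 1 - (t : ZMod m)*b) (by rw [hLd]; exact .tail _ (.tail _ (.tail _ (.tail _ (.tail _ (.tail _ (.head _)))))))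
  have D08 : (t : ZMod m) * d ≠ 1 - (s : ZMod m)*a := hd1 ((t : ZMod m), 1 - (s : ZMod m)*a) (by rw [hLd]; exact .tail _ (.tail _ (.tail _ (.tail _ (.tail _ (.tail _ (.tail _ (.head _))))))))
  have D09 : (t : ZMod m) * d ≠ 1 - (s : ZMod m)*b := hd1 ((t : ZMod m), 1 - (s : ZMod m)*b) (by rw [hLd]; exact .tail _ (.tail _ (.tail _ (.tail _ (.tail _ (.tail _ (.tail _ (.tail _ (.head _)))))))))
  have D10 : (s : ZMod m) * d ≠ (t : ZMod m)*a + (s : ZMod m)*a + (s : ZMod m)*b - 1 := hd1 ((s : ZMod m), (t : ZMod m)*a + (s : ZMod m)*a + (s : ZMod m)*b - 1) (by rw [hLd]; exact .tail _ (.tail _ (.tail _ (.tail _ (.tail _ (.tail _ (.tail _ (.tail _ (.tail _ (.head _))))))))))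
  have D11 : (s : ZMod m) * d ≠ (t : ZMod m)*a + 2*(s : ZMod m)*b - 1 := hd1 ((s : ZMod m), (t : ZMod m)*a + 2*(s : ZMod m)*b - 1) (by rw [hLd]; exact .tail _ (.tail _ (.tail _ (.tail _ (.tail _ (.tail _ (.tail _ (.tail _ (.tail _ (.tail _ (.head _)))))))))))
  have D12 : (s : ZMod m) * d ≠ (t : ZMod m)*b + (s : ZMod m)*a + (s : ZMod m)*b - 1 := hd1 ((s : ZMod m), (t : ZMod m)*b + (s : ZMod m)*a + (s : ZMod m)*b - 1) (by rw [hLd]; exact .tail _ (.tail _ (.tail _ (.tail _ (.tail _ (.tail _ (.tail _ (.tail _ (.tail _ (.tail _ (.tail _ (.head _))))))))))))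
  have D13 : (s : ZMod m) * d ≠ (t : ZMod m)*b + 2*(s : ZMod m)*b - 1 := hd1 ((s : ZMod m), (t : ZMod m)*b + 2*(s : ZMod m)*b - 1) (by rw [hLd]; exact .tail _ (.tail _ (.tail _ (.tail _ (.tail _ (.tail _ (.tail _ (.tail _ (.tail _ (.tail _ (.tail _ (.tail _ (.head _)))))))))))))
  have D14 : (t : ZMod m) * d ≠ (t : ZMod m)*a + (t : ZMod m)*b + (s : ZMod m)*a - 1 := hd1 ((t : ZMod m), (t : ZMod m)*a + (t : ZMod m)*b + (s : ZMod m)*a - 1) (by rw [hLd]; exact .tail _ (.tail _ (.tail _ (.tail _ (.tail _ (.tail _ (.tail _ (.tail _ (.tail _ (.tail _ (.tail _ (.tail _ (.tail _ (.head _))))))))))))))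
  have D15 : (t : ZMod m) * d ≠ 2*(t : ZMod m)*b + (s : ZMod m)*a - 1 := hd1 ((t : ZMod m), 2*(t : ZMod m)*b + (s : ZMod m)*a - 1) (by rw [hLd]; exact .tail _ (.tail _ (.tail _ (.tail _ (.tail _ (.tail _ (.tail _ (.tail _ (.tail _ (.tail _ (.tail _ (.tail _ (.tail _ (.tail _ (.head _)))))))))))))))
  have D16 : (t : ZMod m) * d ≠ (t : ZMod m)*a + (t : ZMod m)*b + (s : ZMod m)*b - 1 := hd1 ((t : ZMod m), (t : ZMod m)*a + (t : ZMod m)*b + (s : ZMod m)*b - 1) (by rw [hLd]; exact .tail _ (.tail _ (.tail _ (.tail _ (.tail _ (.tail _ (.tail _ (.tail _ (.tail _ (.tail _ (.tail _ (.tail _ (.tail _ (.tail _ (.tail _ (.head _))))))))))))))))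
  have D17 : (t : ZMod m) * d ≠ 2*(t : ZMod m)*b + (s : ZMod m)*b - 1 := hd1 ((t : ZMod m), 2*(t : ZMod m)*b + (s : ZMod m)*b - 1) (by rw [hLd]; exact .tail _ (.tail _ (.tail _ (.tail _ (.tail _ (.tail _ (.tail _ (.tail _ (.tail _ (.tail _ (.tail _ (.tail _ (.tail _ (.tail _ (.tail _ (.tail _ (.head _)))))))))))))))))
  have D18 : ((t : ZMod m) - (s : ZMod m)) * d ≠ 1 - (s : ZMod m)*a - (s : ZMod m)*b := hd1 (((t : ZMod m) - (s : ZMod m)), 1 - (s : ZMod m)*a - (s : ZMod m)*b) (by rw [hLd]; exact .tail _ (.tail _ (.tail _ (.tail _ (.tail _ (.tail _ (.tail _ (.tail _ (.tail _ (.tail _ (.tail _ (.tail _ (.tail _ (.tail _ (.tail _ (.tail _ (.tail _ (.head _))))))))))))))))))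
  have D19 : ((t : ZMod m) - (s : ZMod m)) * d ≠ 1 - 2*(s : ZMod m)*b := hd1 (((t : ZMod m) - (s : ZMod m)), 1 - 2*(s : ZMod m)*b) (by rw [hLd]; exact .tail _ (.tail _ (.tail _ (.tail _ (.tail _ (.tail _ (.tail _ (.tail _ (.tail _ (.tail _ (.tail _ (.tail _ (.tail _ (.tail _ (.tail _ (.tail _ (.tail _ (.tail _ (.head _)))))))))))))))))))
  have D20 : ((s : ZMod m) - (t : ZMod m)) * d ≠ 1 - (t : ZMod m)*a - (t : ZMod m)*b := hd1 (((s : ZMod m) - (t : ZMod m)), 1 - (t : ZMod m)*a - (t : ZMod m)*b) (by rw [hLd]; exact .tail _ (.tail _ (.tail _ (.tail _ (.tail _ (.tail _ (.tail _ (.tail _ (.tail _ (.tail _ (.tail _ (.tail _ (.tail _ (.tail _ (.tail _ (.tail _ (.tail _ (.tail _ (.tail _ (.head _))))))))))))))))))))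
  have D21 : ((s : ZMod m) - (t : ZMod m)) * d ≠ 1 - 2*(t : ZMod m)*b := hd1 (((s : ZMod m) - (t : ZMod m)), 1 - 2*(t : ZMod m)*b) (by rw [hLd]; exact .tail _ (.tail _ (.tail _ (.tail _ (.tail _ (.tail _ (.tail _ (.tail _ (.tail _ (.tail _ (.tail _ (.tail _ (.tail _ (.tail _ (.tail _ (.tail _ (.tail _ (.tail _ (.tail _ (.tail _ (.head _)))))))))))))))))))))
  -- cast simplifications
  have ct2 : ((t - 2 : ℕ) : ZMod m) = (t : ZMod m) - 2 := by
    rw [Nat.cast_sub (by omega : 2 ≤ t)]; norm_num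
  have ct1 : ((t - 1 : ℕ) : ZMod m) = (t : ZMod m) - 1 := by
    rw [Nat.cast_sub (by omega : 1 ≤ t)]; norm_num
  have cs1 : ((s - 1 : ℕ) : ZMod m) = (s : ZMod m) - 1 := by
    rw [Nat.cast_sub (by omega : 1 ≤ s)]; norm_num
  have cs2 : ((s - 2 : ℕ) : ZMod m) = (s : ZMod m) - 2 := by
    rw [Nat.cast_sub (by omega : 2 ≤ s)]; norm_num
  refine ⟨c, d, 2*a - c, a+b-c, a+b-d, 2*b-d, ?_, ?_, ?_, ?_, ?_, ?_, ?_, hone, ?_, ?_, ?_, ?_⟩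
  · rw [ct2]; linear_combination hab
  · rw [ct1, cs1]; linear_combination hab
  · rw [ct1, cs1]; linear_combination hab
  · rw [cs2]; linear_combination hab
  · -- (i)
    refine List.pairwise_cons.mpr ⟨?_, List.pairwise_cons.mpr ⟨?_,
      List.pairwise_cons.mpr ⟨?_, List.pairwise_cons.mpr ⟨?_,
        List.pairwise_singleton _ _⟩⟩⟩⟩ <;>
      intro x hx <;> fin_cases hx
    · exact hne
    · exact fun h => C01 (by linear_combination -h)
    · exact fun h => C01 (by linear_combination h)
    · exact fun h => C02 (by linear_combination h)
    · exact fun h => C02 (by linear_combination -h)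
    · exact fun h => C05 (by linear_combination h)
    · exact fun h => C01 (by linear_combination h)
    · exact fun h => C03 (by linear_combination h)
    · exact fun h => C04 (by linear_combination h)
    · exact fun h => hne (by linear_combination h)
  · -- (ii)
    refine List.pairwise_cons.mpr ⟨?_, List.pairwise_cons.mpr ⟨?_,
      List.pairwise_cons.mpr ⟨?_, List.pairwise_cons.mpr ⟨?_,
        List.pairwise_singleton _ _⟩⟩⟩⟩ <;>
      intro x hx <;> fin_cases hx
    · exact hne
    · exact fun h => D01 (by linear_combination -h)
    · exact fun h => D02 (by linear_combination h)
    · exact fun h => D05 (by linear_combination h)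
    · exact fun h => D02 (by linear_combination -h)
    · exact fun h => D01 (by linear_combination h)
    · exact fun h => D02 (by linear_combination h)
    · exact fun h => D03 (by linear_combination h)
    · exact fun h => D04 (by linear_combination h)
    · exact fun h => hne (by linear_combination h)
  · -- (iii)
    intro x hx y hy hxy h1 h2
    simp only [Finset.mem_insert, Finset.mem_singleton] at hx hy
    rcases hx with rfl | rfl | rfl | rfl | rfl <;> rcases hy with rfl | rfl | rfl | rfl | rfl
    · exact absurd rfl hxy
    · exact absurd rfl h2
    · exact fun h => C06 (by linear_combination h)
    · exact fun h => C10 (by linear_combination -h)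
    · exact fun h => C11 (by linear_combination -h)
    · exact absurd (Finset.pair_comm _ _) h2
    · exact absurd rfl hxy
    · exact fun h => C07 (by linear_combination h)
    · exact fun h => C12 (by linear_combination -h)
    · exact fun h => C13 (by linear_combination -h)
    · exact fun h => C08 (by linear_combination h)
    · exact fun h => C09 (by linear_combination h)
    · exact absurd rfl hxy
    · exact fun h => C18 (by linear_combination h)
    · exact fun h => C19 (by linear_combination h)
    · exact fun h => C14 (by linear_combination -h)
    · exact fun h => C16 (by linear_combination -h)
    · exact fun h => C20 (by linear_combination h)
    · exact absurd rfl hxy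
    · exact absurd rfl h1
    · exact fun h => C15 (by linear_combination -h)
    · exact fun h => C17 (by linear_combination -h)
    · exact fun h => C21 (by linear_combination h)
    · exact absurd (Finset.pair_comm _ _) h1
    · exact absurd rfl hxy
  · -- (iv)
    intro x hx y hy hxy h1 h2
    simp only [Finset.mem_insert, Finset.mem_singleton] at hx hy
    rcases hx with rfl | rfl | rfl | rfl | rfl <;> rcases hy with rfl | rfl | rfl | rfl | rfl
    · exact absurd rfl hxy
    · exact absurd rfl h2
    · exact fun h => D06 (by linear_combination h)
    · exact fun h => D10 (by linear_combination -h)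
    · exact fun h => D11 (by linear_combination -h)
    · exact absurd (Finset.pair_comm _ _) h2
    · exact absurd rfl hxy
    · exact fun h => D07 (by linear_combination h)
    · exact fun h => D12 (by linear_combination -h)
    · exact fun h => D13 (by linear_combination -h)
    · exact fun h => D08 (by linear_combination h)
    · exact fun h => D09 (by linear_combination h)
    · exact absurd rfl hxy
    · exact fun h => D18 (by linear_combination h)
    · exact fun h => D19 (by linear_combination h)
    · exact fun h => D14 (by linear_combination -h)
    · exact fun h => D16 (by linear_combination -h)
    · exact fun h => D20 (by linear_combination h)
    · exact absurd rfl hxy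
    · exact absurd rfl h1
    · exact fun h => D15 (by linear_combination -h)
    · exact fun h => D17 (by linear_combination -h)
    · exact fun h => D21 (by linear_combination h)
    · exact absurd (Finset.pair_comm _ _) h1
    · exact absurd rfl hxy
  · exact fun h => hdc h.symm
  · exact fun h => hdb' (by linear_combination h)
  · exact hdb'
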